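/- Let M ≥ 2 be an integer and x_1,...,x_M be positive reals with sum equal to M. For any a>0, b>0, it holds that M^4/(aM+b)^2 > Σ_{m=1}^M x_m^4/(a x_m + b)^2 ≥ M/(a+b)^2. -/

import Mathlib

open Finset

lemma two_var_superadd (a b x y : ℝ) (ha : 0 < a) (hb : 0 < b) (hx : 0 ≤ x) (hy : 0 ≤ y) :
    x^2/(a*x+b) + y^2/(a*y+b) ≤ (x+y)^2/(a*(x+y)+b) := by
  have hdx : 0 < a*x+b := by positivity
  have hdy : 0 < a*y+b := by positivity
  have hdxy : 0 < a*(x+y)+b := by positivity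
  rw [div_add_div _ _ (ne_of_gt hdx) (ne_of_gt hdy), div_le_div_iff₀ (by positivity) hdxy]
  have hfact : (x+y)^2*((a*x+b)*(a*y+b)) - (x^2*(a*y+b)+(a*x+b)*y^2)*(a*(x+y)+b)
      = b*(x*y)*(a*(x+y)+2*b) := by ring
  nlinarith [mul_nonneg (mul_nonneg hb.le (mul_nonneg hx hy))
    (by positivity : (0:ℝ) ≤ a*(x+y)+2*b)]

lemma sum_superadd {ι : Type*} (s : Finset ι) (a b : ℝ) (ha : 0 < a) (hb : 0 < b)
    (x : ι → ℝ) (hx : ∀ i ∈ s, 0 ≤ x i) :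
    ∑ i ∈ s, (x i)^2/(a * x i + b) ≤ (∑ i ∈ s, x i)^2 / (a * (∑ i ∈ s, x i) + b) := by
  induction s using Finset.cons_induction with
  | empty => norm_num
  | cons i s hi ih =>
    rw [Finset.sum_cons, Finset.sum_cons]
    have hxi := hx i (Finset.mem_cons_self _ _)
    have hxs : 0 ≤ ∑ j ∈ s, x j :=
      Finset.sum_nonneg fun j hj => hx j (Finset.mem_cons_of_mem hj)
    calc (x i)^2/(a * x i + b) + ∑ j ∈ s, (x j)^2/(a * x j + b)
        ≤ (x i)^2/(a * x i + b) + (∑ j ∈ s, x j)^2 / (a * (∑ j ∈ s, x j) + b) :=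
          add_le_add le_rfl (ih fun j hj => hx j (Finset.mem_cons_of_mem hj))
      _ ≤ _ := two_var_superadd a b _ _ ha hb hxi hxs

/-- For `M ≥ 2` positive reals summing to `M`,
`M^4/(aM+b)^2 > Σ x_m^4/(a x_m + b)^2 ≥ M/(a+b)^2`. -/
theorem sum_quart_div_sq_bounds (M : ℕ) (hM : 2 ≤ M) (a b : ℝ) (ha : 0 < a) (hb : 0 < b)
    (x : Fin M → ℝ) (hx : ∀ m, 0 < x m) (hsum : ∑ m, x m = M) :
    (M : ℝ) ^ 4 / (a * M + b) ^ 2 > ∑ m, (x m) ^ 4 / (a * x m + b) ^ 2 ∧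
      ∑ m, (x m) ^ 4 / (a * x m + b) ^ 2 ≥ M / (a + b) ^ 2 := by
  have hd : ∀ m, 0 < a * x m + b := fun m => by have := hx m; positivity
  set g : Fin M → ℝ := fun m => (x m)^2 / (a * x m + b) with hg
  have hgpos : ∀ m, 0 < g m := fun m => div_pos (pow_pos (hx m) 2) (hd m)
  have hterm : ∀ m, (x m) ^ 4 / (a * x m + b) ^ 2 = (g m)^2 := by
    intro m; rw [hg]; rw [div_pow, ← pow_mul]
  have hne : (Finset.univ : Finset (Fin M)).Nonempty := by
    rw [Finset.univ_nonempty_iff]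
    exact Fin.pos_iff_nonempty.mp (by omega)
  set S : ℝ := ∑ m, g m with hS
  have hSpos : 0 < S := Finset.sum_pos (fun m _ => hgpos m) hne
  -- superadditivity bound on S
  have hSle : S ≤ (M:ℝ)^2 / (a * M + b) := by
    have := sum_superadd Finset.univ a b ha hb x (fun i _ => (hx i).le)
    rwa [hsum] at this
  constructor
  · -- upper bound
    have hlt : ∀ m, g m < S := by
      intro m
      have herase : S = g m + ∑ j ∈ Finset.univ.erase m, g j :=
        (Finset.add_sum_erase _ g (Finset.mem_univ m)).symm
      have hne2 : (Finset.univ.erase m).Nonempty := by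
        rw [← Finset.card_pos, Finset.card_erase_of_mem (Finset.mem_univ m)]
        simp only [Finset.card_univ, Fintype.card_fin]
        omega
      have : 0 < ∑ j ∈ Finset.univ.erase m, g j :=
        Finset.sum_pos (fun j _ => hgpos j) hne2
      linarith
    have h1 : ∑ m, (x m) ^ 4 / (a * x m + b) ^ 2 = ∑ m, (g m)^2 := by
      exact Finset.sum_congr rfl fun m _ => hterm m
    have h2 : ∑ m, (g m)^2 < ∑ m, S * g m := by
      refine Finset.sum_lt_sum_of_nonempty hne fun m _ => ?_
      have := hlt m
      have := hgpos m
      nlinarith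
    have h3 : ∑ m, S * g m = S * S := by rw [← Finset.mul_sum]
    have h4 : S * S ≤ ((M:ℝ)^2 / (a * M + b)) * ((M:ℝ)^2 / (a * M + b)) :=
      mul_le_mul hSle hSle hSpos.le (by positivity)
    have hdM : 0 < a * (M:ℝ) + b := by
      have : (0:ℝ) < M := by exact_mod_cast (by omega : 0 < M)
      positivity
    have h5 : ((M:ℝ)^2 / (a * M + b)) * ((M:ℝ)^2 / (a * M + b)) = (M:ℝ)^4 / (a * M + b)^2 := by
      field_simp
    rw [h1]
    calc ∑ m, (g m)^2 < S * S := by rw [← h3]; exact h2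
      _ ≤ _ := h4
      _ = _ := h5.le.antisymm h5.ge
  · -- lower bound via Cauchy-Schwarz twice
    have key1 : ((M:ℝ))^2 ≤ S * ((a + b) * M) := by
      have cs := Finset.sum_mul_sq_le_sq_mul_sq Finset.univ
        (fun m => x m / Real.sqrt (a * x m + b)) (fun m => Real.sqrt (a * x m + b))
      have e1 : ∀ m, x m / Real.sqrt (a * x m + b) * Real.sqrt (a * x m + b) = x m := by
        intro m
        rw [div_mul_cancel₀]
        exact (Real.sqrt_pos.mpr (hd m)).ne'
      have e2 : ∀ m, (x m / Real.sqrt (a * x m + b))^2 = (x m)^2 / (a * x m + b) := by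
        intro m
        rw [div_pow, Real.sq_sqrt (hd m).le]
      have e3 : ∀ m, (Real.sqrt (a * x m + b))^2 = a * x m + b := fun m =>
        Real.sq_sqrt (hd m).le
      simp only [e1, e2, e3] at cs
      rw [hsum] at cs
      have : ∑ m, (a * x m + b) = (a + b) * M := by
        rw [Finset.sum_add_distrib, ← Finset.mul_sum, hsum, Finset.sum_const,
          Finset.card_univ, Fintype.card_fin, nsmul_eq_mul]
        ring
      rw [this] at cs
      exact cs
    have key2 : S^2 ≤ (∑ m, (g m)^2) * M := by
      have cs := Finset.sum_mul_sq_le_sq_mul_sq Finset.univ g (fun _ => (1:ℝ))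
      simp only [mul_one, one_pow, Finset.sum_const, Finset.card_univ, Fintype.card_fin,
        nsmul_eq_mul, mul_one] at cs
      exact cs
    have hMpos : (0:ℝ) < M := by exact_mod_cast (by omega : 0 < M)
    have hab : (0:ℝ) < a + b := by positivity
    -- S ≥ M/(a+b)
    have hS1 : (M:ℝ) / (a + b) ≤ S := by
      rw [div_le_iff₀ hab]
      have h := key1
      nlinarith
    have hsum2 : ∑ m, (x m) ^ 4 / (a * x m + b) ^ 2 = ∑ m, (g m)^2 :=
      Finset.sum_congr rfl fun m _ => hterm m
    rw [ge_iff_le, hsum2, div_le_iff₀ (by positivity : (0:ℝ) < (a+b)^2)]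
    have hSsq : ((M:ℝ) / (a + b))^2 ≤ S^2 := by
      apply pow_le_pow_left₀ (by positivity) hS1
    have : ((M:ℝ)/(a+b))^2 ≤ (∑ m, (g m)^2) * M := le_trans hSsq key2
    have hgoal : (M:ℝ) ≤ (∑ m, (g m)^2) * (a+b)^2 := by
      have hM2 : ((M:ℝ)/(a+b))^2 = (M:ℝ)^2 / (a+b)^2 := by rw [div_pow]
      rw [hM2] at this
      rw [div_le_iff₀ (by positivity : (0:ℝ) < (a+b)^2)] at this
      nlinarith [Finset.sum_nonneg (fun m (_ : m ∈ Finset.univ) => sq_nonneg (g m))]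
    linarith
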